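/- Let w > 0 and 0 < h ≤ w/8, and let P be a finite set of points contained in the rectangle [0, w] × [0, h] such that P contains a point with first coordinate 0 and a point with first coordinate w, and no point of P has first coordinate in the open interval (w/4, 3w/4). Let A := {p ∈ P : p₁ ≤ w/4} and B := {p ∈ P : p₁ ≥ 3w/4}. Then A and B are nonempty, A ∪ B = P, and for every partition (Q1, Q2) of P into two nonempty disjoint subsets with Q1 ∪ Q2 = P one has per(A) + per(B) ≤ per(Q1) + per(Q2). -/

import Mathlib

open Real Set

noncomputable def per (S : Set (EuclideanSpace ℝ (Fin 2))) : ℝ :=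
  ∫ θ in (0:ℝ)..π,
    (sSup ((fun p => p 0 * Real.cos θ + p 1 * Real.sin θ) '' S) -
     sInf ((fun p => p 0 * Real.cos θ + p 1 * Real.sin θ) '' S))

def IsPartition (P P1 P2 : Set (EuclideanSpace ℝ (Fin 2))) : Prop :=
  P1.Nonempty ∧ P2.Nonempty ∧ Disjoint P1 P2 ∧ P1 ∪ P2 = P

def Separates (u : EuclideanSpace ℝ (Fin 2)) (c : ℝ)
    (P1 P2 : Set (EuclideanSpace ℝ (Fin 2))) : Prop :=
  (∀ p ∈ P1, (inner ℝ p u : ℝ) ≤ c) ∧ (∀ q ∈ P2, c ≤ (inner ℝ q u : ℝ))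

/-- The separation distance between the convex hulls of `A` and `B`. -/
noncomputable def sepDist (A B : Set (EuclideanSpace ℝ (Fin 2))) : ℝ :=
  sInf (Set.image2 dist (convexHull ℝ A) (convexHull ℝ B))

/-! ### Auxiliary lemmas -/

local notation "E2" => EuclideanSpace ℝ (Fin 2)

/-- The width function whose integral is `per`. -/
noncomputable def wdt (S : Set (EuclideanSpace ℝ (Fin 2))) (θ : ℝ) : ℝ :=
  sSup ((fun p => p 0 * Real.cos θ + p 1 * Real.sin θ) '' S) -
  sInf ((fun p => p 0 * Real.cos θ + p 1 * Real.sin θ) '' S)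

lemma per_eq_wdt (S : Set E2) : per S = ∫ θ in (0:ℝ)..π, wdt S θ := rfl

lemma cont_wdt (S : Set E2) (hfin : S.Finite) (hne : S.Nonempty) :
    Continuous (wdt S) := by
  have hne' : hfin.toFinset.Nonempty := by rwa [Set.Finite.toFinset_nonempty]
  have h1 : (fun θ => sSup ((fun p : E2 => p 0 * Real.cos θ + p 1 * Real.sin θ) '' S))
      = fun θ => hfin.toFinset.sup'
          hne' (fun p => p 0 * Real.cos θ + p 1 * Real.sin θ) := by
    funext θ
    rw [Finset.sup'_eq_csSup_image, Set.Finite.coe_toFinset]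
  have h2 : (fun θ => sInf ((fun p : E2 => p 0 * Real.cos θ + p 1 * Real.sin θ) '' S))
      = fun θ => hfin.toFinset.inf'
          hne' (fun p => p 0 * Real.cos θ + p 1 * Real.sin θ) := by
    funext θ
    rw [Finset.inf'_eq_csInf_image, Set.Finite.coe_toFinset]
  have c1 : Continuous (fun θ => sSup ((fun p : E2 =>
      p 0 * Real.cos θ + p 1 * Real.sin θ) '' S)) := by
    rw [h1]
    exact Continuous.finset_sup'_apply
      (f := fun (p : E2) (θ : ℝ) => p 0 * Real.cos θ + p 1 * Real.sin θ) hne'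
      (fun p _ => by fun_prop)
  have c2 : Continuous (fun θ => sInf ((fun p : E2 =>
      p 0 * Real.cos θ + p 1 * Real.sin θ) '' S)) := by
    rw [h2]
    exact Continuous.finset_inf'_apply
      (f := fun (p : E2) (θ : ℝ) => p 0 * Real.cos θ + p 1 * Real.sin θ) hne'
      (fun p _ => by fun_prop)
  exact c1.sub c2

lemma le_sSup_prj (S : Set E2) (hfin : S.Finite) {q : E2} (hq : q ∈ S) (θ : ℝ) :
    q 0 * Real.cos θ + q 1 * Real.sin θ ≤
      sSup ((fun p => p 0 * Real.cos θ + p 1 * Real.sin θ) '' S) :=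
  le_csSup ((hfin.image _).bddAbove) ⟨q, hq, rfl⟩

lemma sInf_prj_le (S : Set E2) (hfin : S.Finite) {q : E2} (hq : q ∈ S) (θ : ℝ) :
    sInf ((fun p => p 0 * Real.cos θ + p 1 * Real.sin θ) '' S) ≤
      q 0 * Real.cos θ + q 1 * Real.sin θ :=
  csInf_le ((hfin.image _).bddBelow) ⟨q, hq, rfl⟩

lemma wdt_nonneg (S : Set E2) (hfin : S.Finite) (hne : S.Nonempty) (θ : ℝ) :
    0 ≤ wdt S θ := by
  obtain ⟨p, hp⟩ := hne
  have := le_sSup_prj S hfin hp θ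
  have := sInf_prj_le S hfin hp θ
  unfold wdt; linarith

lemma abs_le_wdt (S : Set E2) (hfin : S.Finite) {p q : E2} (hp : p ∈ S) (hq : q ∈ S) (θ : ℝ) :
    |(q 0 - p 0) * Real.cos θ + (q 1 - p 1) * Real.sin θ| ≤ wdt S θ := by
  have h1 := le_sSup_prj S hfin hp θ
  have h2 := le_sSup_prj S hfin hq θ
  have h3 := sInf_prj_le S hfin hp θ
  have h4 := sInf_prj_le S hfin hq θ
  rw [abs_le]; unfold wdt; constructor <;> nlinarith

lemma integral_lin (a b s t : ℝ) :
    ∫ θ in s..t, (a * Real.cos θ + b * Real.sin θ) =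
      a * (Real.sin t - Real.sin s) + b * (Real.cos s - Real.cos t) := by
  rw [intervalIntegral.integral_add (f := fun θ => a * Real.cos θ) (g := fun θ => b * Real.sin θ)
      ((continuous_const.mul Real.continuous_cos).intervalIntegrable _ _)
      ((continuous_const.mul Real.continuous_sin).intervalIntegrable _ _),
    intervalIntegral.integral_const_mul, intervalIntegral.integral_const_mul,
    integral_cos, integral_sin]

lemma per_nonneg (S : Set E2) (hfin : S.Finite) (hne : S.Nonempty) : 0 ≤ per S := by
  rw [per_eq_wdt]
  exact intervalIntegral.integral_nonneg Real.pi_pos.le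
    (fun θ _ => wdt_nonneg S hfin hne θ)

lemma per_ge (S : Set E2) (hfin : S.Finite) {p q : E2} (hp : p ∈ S) (hq : q ∈ S) :
    2 * (q 0 - p 0) ≤ per S := by
  set a := q 0 - p 0 with ha
  set b := q 1 - p 1 with hb
  have hcont : Continuous (fun θ => |a * Real.cos θ + b * Real.sin θ|) := by fun_prop
  have step2 : ∫ θ in (0:ℝ)..π, |a * Real.cos θ + b * Real.sin θ| ≤ per S := by
    rw [per_eq_wdt]
    apply intervalIntegral.integral_mono_on Real.pi_pos.le
      (hcont.intervalIntegrable _ _)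
      ((cont_wdt S hfin ⟨p, hp⟩).intervalIntegrable _ _)
    exact fun θ _ => abs_le_wdt S hfin hp hq θ
  have hsplit : ∫ θ in (0:ℝ)..π, |a * Real.cos θ + b * Real.sin θ| =
      (∫ θ in (0:ℝ)..(π/2), |a * Real.cos θ + b * Real.sin θ|) +
      ∫ θ in (π/2)..π, |a * Real.cos θ + b * Real.sin θ| :=
    (intervalIntegral.integral_add_adjacent_intervals
      (hcont.intervalIntegrable _ _) (hcont.intervalIntegrable _ _)).symm
  have h1 : |∫ θ in (0:ℝ)..(π/2), (a * Real.cos θ + b * Real.sin θ)| ≤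
      ∫ θ in (0:ℝ)..(π/2), |a * Real.cos θ + b * Real.sin θ| :=
    intervalIntegral.abs_integral_le_integral_abs (by positivity)
  have h2 : |∫ θ in (π/2)..π, (a * Real.cos θ + b * Real.sin θ)| ≤
      ∫ θ in (π/2)..π, |a * Real.cos θ + b * Real.sin θ| :=
    intervalIntegral.abs_integral_le_integral_abs (by linarith [Real.pi_pos])
  have e1 : ∫ θ in (0:ℝ)..(π/2), (a * Real.cos θ + b * Real.sin θ) = a + b := by
    rw [integral_lin]; simp
  have e2 : ∫ θ in (π/2)..π, (a * Real.cos θ + b * Real.sin θ) = b - a := by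
    rw [integral_lin]; simp; ring
  rw [e1] at h1; rw [e2] at h2
  have hab : a - b ≤ |b - a| := by rw [abs_sub_comm]; exact le_abs_self _
  rw [hsplit] at step2
  linarith [le_abs_self (a + b)]

lemma integral_abs_cos : ∫ θ in (0:ℝ)..π, |Real.cos θ| = 2 := by
  have hE1 : Set.EqOn (fun x => |Real.cos x|) Real.cos (Set.uIcc (0:ℝ) (π/2)) := by
    intro x hx
    rw [Set.uIcc_of_le (by positivity)] at hx
    exact abs_of_nonneg (Real.cos_nonneg_of_mem_Icc
      ⟨le_trans (by linarith [Real.pi_pos]) hx.1, hx.2⟩)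
  have h1 : ∫ θ in (0:ℝ)..(π/2), |Real.cos θ| = 1 := by
    rw [intervalIntegral.integral_congr hE1, integral_cos]; simp
  have hE2 : Set.EqOn (fun x => |Real.cos x|) (fun x => -Real.cos x)
      (Set.uIcc (π/2) π) := by
    intro x hx
    rw [Set.uIcc_of_le (by linarith [Real.pi_pos])] at hx
    exact abs_of_nonpos (Real.cos_nonpos_of_pi_div_two_le_of_le hx.1
      (hx.2.trans (by linarith [Real.pi_pos])))
  have h2 : ∫ θ in (π/2)..π, |Real.cos θ| = 1 := by
    rw [intervalIntegral.integral_congr hE2, intervalIntegral.integral_neg, integral_cos]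
    simp
  have := intervalIntegral.integral_add_adjacent_intervals (μ := MeasureTheory.volume)
    ((by fun_prop : Continuous fun θ : ℝ => |Real.cos θ|).intervalIntegrable (0:ℝ) (π/2))
    ((by fun_prop : Continuous fun θ : ℝ => |Real.cos θ|).intervalIntegrable (π/2) π)
  rw [h1, h2] at this
  linarith [this]

lemma per_le_box (S : Set E2) (hfin : S.Finite) (hne : S.Nonempty) (c W ht : ℝ)
    (hx : ∀ p ∈ S, c ≤ p 0 ∧ p 0 ≤ c + W) (hy : ∀ p ∈ S, 0 ≤ p 1 ∧ p 1 ≤ ht) :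
    per S ≤ 2 * W + 2 * ht := by
  have key : ∀ θ ∈ Set.Icc (0:ℝ) π, wdt S θ ≤ W * |Real.cos θ| + ht * Real.sin θ := by
    intro θ hθ
    have hsin : 0 ≤ Real.sin θ := Real.sin_nonneg_of_nonneg_of_le_pi hθ.1 hθ.2
    obtain ⟨q, hq, hq'⟩ := (hne.image (fun p : E2 =>
      p 0 * Real.cos θ + p 1 * Real.sin θ)).csSup_mem (hfin.image _)
    obtain ⟨p, hp, hp'⟩ := (hne.image (fun p : E2 =>
      p 0 * Real.cos θ + p 1 * Real.sin θ)).csInf_mem (hfin.image _)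
    have e : wdt S θ = (q 0 - p 0) * Real.cos θ + (q 1 - p 1) * Real.sin θ := by
      unfold wdt; rw [← hq', ← hp']; ring
    rw [e]
    have hxq := hx q hq; have hxp := hx p hp
    have hyq := hy q hq; have hyp := hy p hp
    have c1 : (q 0 - p 0) * Real.cos θ ≤ W * |Real.cos θ| := by
      calc (q 0 - p 0) * Real.cos θ ≤ |(q 0 - p 0) * Real.cos θ| := le_abs_self _
        _ = |q 0 - p 0| * |Real.cos θ| := abs_mul _ _
        _ ≤ W * |Real.cos θ| := by
            apply mul_le_mul_of_nonneg_right _ (abs_nonneg _)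
            rw [abs_le]; constructor <;> linarith
    have c2 : (q 1 - p 1) * Real.sin θ ≤ ht * Real.sin θ :=
      mul_le_mul_of_nonneg_right (by linarith) hsin
    linarith
  have hint : per S ≤ ∫ θ in (0:ℝ)..π, (W * |Real.cos θ| + ht * Real.sin θ) := by
    rw [per_eq_wdt]
    apply intervalIntegral.integral_mono_on Real.pi_pos.le
      ((cont_wdt S hfin hne).intervalIntegrable _ _)
      ((by fun_prop : Continuous fun θ =>
        W * |Real.cos θ| + ht * Real.sin θ).intervalIntegrable _ _)
      key
  have e : ∫ θ in (0:ℝ)..π, (W * |Real.cos θ| + ht * Real.sin θ) = 2 * W + 2 * ht := by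
    rw [intervalIntegral.integral_add
        ((by fun_prop : Continuous fun θ : ℝ => W * |Real.cos θ|).intervalIntegrable _ _)
        ((by fun_prop : Continuous fun θ : ℝ => ht * Real.sin θ).intervalIntegrable _ _)]
    rw [intervalIntegral.integral_const_mul, intervalIntegral.integral_const_mul,
      integral_abs_cos, integral_sin]
    simp; ring
  linarith [hint, e.le]

theorem flat_rectangle_optimal_partition
    (w h : ℝ) (hw : 0 < w) (hh : 0 < h) (hhw : h ≤ w / 8)
    (P : Set (EuclideanSpace ℝ (Fin 2))) (hfin : P.Finite)
    (hbox : ∀ p ∈ P, p 0 ∈ Set.Icc 0 w ∧ p 1 ∈ Set.Icc 0 h)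
    (hleft : ∃ p ∈ P, p 0 = 0) (hright : ∃ p ∈ P, p 0 = w)
    (hgap : ∀ p ∈ P, p 0 ∉ Set.Ioo (w / 4) (3 * w / 4)) :
    ({p ∈ P | p 0 ≤ w / 4}).Nonempty ∧
    ({p ∈ P | 3 * w / 4 ≤ p 0}).Nonempty ∧
    {p ∈ P | p 0 ≤ w / 4} ∪ {p ∈ P | 3 * w / 4 ≤ p 0} = P ∧
    ∀ Q1 Q2 : Set (EuclideanSpace ℝ (Fin 2)), IsPartition P Q1 Q2 →
      per {p ∈ P | p 0 ≤ w / 4} + per {p ∈ P | 3 * w / 4 ≤ p 0} ≤ per Q1 + per Q2 := by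
  set A := {p ∈ P | p 0 ≤ w / 4} with hA
  set B := {p ∈ P | 3 * w / 4 ≤ p 0} with hB
  obtain ⟨l, hlP, hl0⟩ := hleft
  obtain ⟨r, hrP, hr0⟩ := hright
  have hlA : l ∈ A := ⟨hlP, by rw [hl0]; linarith⟩
  have hrB : r ∈ B := ⟨hrP, by rw [hr0]; linarith⟩
  have hABP : A ∪ B = P := by
    ext p; constructor
    · rintro (hp | hp) <;> exact hp.1
    · intro hp
      rcases le_or_gt (p 0) (w / 4) with hc | hc
      · exact Or.inl ⟨hp, hc⟩
      · exact Or.inr ⟨hp, by_contra fun hc2 => hgap p hp ⟨hc, lt_of_not_ge hc2⟩⟩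
  have hfinA : A.Finite := hfin.subset fun p hp => hp.1
  have hfinB : B.Finite := hfin.subset fun p hp => hp.1
  have hperA : per A ≤ 2 * (w / 4) + 2 * h :=
    per_le_box A hfinA ⟨l, hlA⟩ 0 (w / 4) h
      (fun p hp => ⟨(hbox p hp.1).1.1, by simpa using hp.2⟩)
      (fun p hp => ⟨(hbox p hp.1).2.1, (hbox p hp.1).2.2⟩)
  have hperB : per B ≤ 2 * (w / 4) + 2 * h :=
    per_le_box B hfinB ⟨r, hrB⟩ (3 * w / 4) (w / 4) h
      (fun p hp => ⟨hp.2, by linarith [(hbox p hp.1).1.2]⟩)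
      (fun p hp => ⟨(hbox p hp.1).2.1, (hbox p hp.1).2.2⟩)
  refine ⟨⟨l, hlA⟩, ⟨r, hrB⟩, hABP, ?_⟩
  have main : ∀ R1 R2 : Set (EuclideanSpace ℝ (Fin 2)), R1 ∪ R2 = P → R2.Nonempty →
      (R1 ∩ A).Nonempty → (R1 ∩ B).Nonempty → per A + per B ≤ per R1 + per R2 := by
    rintro R1 R2 huni h2ne ⟨a, haR, haA⟩ ⟨b, hbR, hbB⟩
    have hfin1 : R1.Finite := hfin.subset (huni ▸ Set.subset_union_left)
    have hfin2 : R2.Finite := hfin.subset (huni ▸ Set.subset_union_right)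
    by_cases hc : (R2 ∩ A).Nonempty ∧ (R2 ∩ B).Nonempty
    · obtain ⟨⟨a2, ha2R, ha2A⟩, ⟨b2, hb2R, hb2B⟩⟩ := hc
      have g1 : 2 * (b 0 - a 0) ≤ per R1 := per_ge R1 hfin1 haR hbR
      have g2 : 2 * (b2 0 - a2 0) ≤ per R2 := per_ge R2 hfin2 ha2R hb2R
      have := haA.2; have := hbB.2; have := ha2A.2; have := hb2B.2
      linarith
    · have h2nn : 0 ≤ per R2 := per_nonneg R2 hfin2 h2ne
      rcases not_and_or.mp hc with hcA | hcB
      · have hlR : l ∈ R1 := by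
          rcases (huni ▸ hlP : l ∈ R1 ∪ R2) with hm | hm
          · exact hm
          · exact absurd ⟨l, hm, hlA⟩ hcA
        have g1 : 2 * (b 0 - l 0) ≤ per R1 := per_ge R1 hfin1 hlR hbR
        have := hbB.2
        rw [hl0] at g1
        linarith
      · have hrR : r ∈ R1 := by
          rcases (huni ▸ hrP : r ∈ R1 ∪ R2) with hm | hm
          · exact hm
          · exact absurd ⟨r, hm, hrB⟩ hcB
        have g1 : 2 * (r 0 - a 0) ≤ per R1 := per_ge R1 hfin1 haR hrR
        have := haA.2
        rw [hr0] at g1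
        linarith
  rintro Q1 Q2 ⟨h1ne, h2ne, hdisj, huni⟩
  by_cases h1 : (Q1 ∩ A).Nonempty ∧ (Q1 ∩ B).Nonempty
  · exact main Q1 Q2 huni h2ne h1.1 h1.2
  · by_cases h2 : (Q2 ∩ A).Nonempty ∧ (Q2 ∩ B).Nonempty
    · rw [add_comm (per Q1)]
      exact main Q2 Q1 (by rw [Set.union_comm]; exact huni) h1ne h2.1 h2.2
    · -- neither is mixed: the partition must be {A, B}
      have hmem : ∀ p ∈ P, p ∈ A ∨ p ∈ B := by
        intro p hp
        rw [← hABP] at hp; exact hp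
      rcases not_and_or.mp h1 with h1A | h1B
      · -- Q1 ∩ A = ∅ hence Q1 ⊆ B, l ∈ Q2, so Q2 ∩ A nonempty, so Q2 ∩ B = ∅, Q2 ⊆ A
        have hlQ2 : l ∈ Q2 := by
          rcases (huni ▸ hlP : l ∈ Q1 ∪ Q2) with hm | hm
          · exact absurd ⟨l, hm, hlA⟩ h1A
          · exact hm
        rcases not_and_or.mp h2 with h2A | h2B
        · exact absurd ⟨l, hlQ2, hlA⟩ h2A
        · have hQ1B : Q1 = B := by
            apply Set.Subset.antisymm
            · intro p hp
              rcases hmem p (huni ▸ Set.mem_union_left Q2 hp) with hm | hm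
              · exact absurd ⟨p, hp, hm⟩ h1A
              · exact hm
            · intro p hp
              rcases (huni ▸ hp.1 : p ∈ Q1 ∪ Q2) with hm | hm
              · exact hm
              · exact absurd ⟨p, hm, hp⟩ h2B
          have hQ2A : Q2 = A := by
            apply Set.Subset.antisymm
            · intro p hp
              rcases hmem p (huni ▸ Set.mem_union_right Q1 hp) with hm | hm
              · exact hm
              · exact absurd ⟨p, hp, hm⟩ h2B
            · intro p hp
              rcases (huni ▸ hp.1 : p ∈ Q1 ∪ Q2) with hm | hm
              · exact absurd ⟨p, hm, hp⟩ h1A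
              · exact hm
          rw [hQ1B, hQ2A]; linarith
      · -- Q1 ∩ B = ∅ hence Q1 ⊆ A, r ∈ Q2, so Q2 ∩ A = ∅, Q2 ⊆ B
        have hrQ2 : r ∈ Q2 := by
          rcases (huni ▸ hrP : r ∈ Q1 ∪ Q2) with hm | hm
          · exact absurd ⟨r, hm, hrB⟩ h1B
          · exact hm
        rcases not_and_or.mp h2 with h2A | h2B
        · have hQ1A : Q1 = A := by
            apply Set.Subset.antisymm
            · intro p hp
              rcases hmem p (huni ▸ Set.mem_union_left Q2 hp) with hm | hm
              · exact hm
              · exact absurd ⟨p, hp, hm⟩ h1B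
            · intro p hp
              rcases (huni ▸ hp.1 : p ∈ Q1 ∪ Q2) with hm | hm
              · exact hm
              · exact absurd ⟨p, hm, hp⟩ h2A
          have hQ2B : Q2 = B := by
            apply Set.Subset.antisymm
            · intro p hp
              rcases hmem p (huni ▸ Set.mem_union_right Q1 hp) with hm | hm
              · exact absurd ⟨p, hp, hm⟩ h2A
              · exact hm
            · intro p hp
              rcases (huni ▸ hp.1 : p ∈ Q1 ∪ Q2) with hm | hm
              · exact absurd ⟨p, hm, hp⟩ h1B
              · exact hm
          rw [hQ1A, hQ2B]
        · exact absurd ⟨r, hrQ2, hrB⟩ h2B
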